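/- arXiv:2511.04515 — 2 statements merged into one kernel-verified Lean document; each statement's English description precedes it below -/
import Mathlib

section
/- Let S, A be compact Polish spaces, E, E⁰ Polish spaces, λ_ε ∈ P(E), and F : S × A × P(S×A) × E × E⁰ → S Borel measurable. Suppose there is C̄_F > 0 such that for all (s,a,Λ,e⁰), (s̃,ã,Λ̃,ẽ⁰), the integral ∫_E d_S(F(s,a,Λ,e,e⁰), F(s̃,ã,Λ̃,e,ẽ⁰)) λ_ε(de) ≤ C̄_F·(d_S(s,s̃) + d_A(a,ã) + W(Λ,Λ̃) + d_{E⁰}(e⁰,ẽ⁰)). Define the lifted transition F̄(μ,Λ,e⁰) ∈ P(S) as the pushforward of Λ ⊗ λ_ε by (s,a,e) ↦ F(s,a,Λ,e,e⁰), for Λ with first marginal μ. Then for all (μ,Λ,e⁰) and (μ̃,Λ̃,ẽ⁰) with pj_S(Λ) = μ, pj_S(Λ̃) = μ̃: W_{P(S)}(F̄(μ,Λ,e⁰), F̄(μ̃,Λ̃,ẽ⁰)) ≤ C̄_F·(2·W_{P(S×A)}(Λ,Λ̃) + d_{E⁰}(e⁰,ẽ⁰)). -/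
open MeasureTheory

/-- 1-Wasserstein distance between two (probability) measures on a metric measurable
space, defined as the infimum over all couplings of the mean distance. -/
noncomputable def W1 {X : Type*} [MeasurableSpace X] [PseudoMetricSpace X]
    (μ ν : Measure X) : ℝ :=
  sInf {r : ℝ | ∃ γ : Measure (X × X), IsProbabilityMeasure γ ∧
    γ.map Prod.fst = μ ∧ γ.map Prod.snd = ν ∧ r = ∫ p, dist p.1 p.2 ∂γ}

/-- 1-Wasserstein distance on `P(S × A)` where `S × A` carries the sum metric
`d_{S×A}((s,a),(s',a')) = d_S(s,s') + d_A(a,a')`. -/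
noncomputable def W1sum {S A : Type*} [MeasurableSpace S] [PseudoMetricSpace S]
    [MeasurableSpace A] [PseudoMetricSpace A] (Λ Λ' : Measure (S × A)) : ℝ :=
  sInf {r : ℝ | ∃ γ : Measure ((S × A) × (S × A)), IsProbabilityMeasure γ ∧
    γ.map Prod.fst = Λ ∧ γ.map Prod.snd = Λ' ∧
    r = ∫ q, (dist q.1.1 q.2.1 + dist q.1.2 q.2.2) ∂γ}

/-- Lipschitz estimate for the lifted transition function
`F̄(μ,Λ,e⁰) = (Λ ⊗ λ_ε) ∘ F(·,·,Λ,·,e⁰)⁻¹`: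
`W(F̄(μ,Λ,e⁰), F̄(μ̃,Λ̃,ẽ⁰)) ≤ C̄_F (2 W(Λ,Λ̃) + d(e⁰,ẽ⁰))`. -/
theorem stmt_6 {S A E E0 : Type*}
    [MetricSpace S] [CompactSpace S] [MeasurableSpace S] [BorelSpace S]
    [MetricSpace A] [CompactSpace A] [MeasurableSpace A] [BorelSpace A]
    [MetricSpace E] [MeasurableSpace E] [BorelSpace E] [PolishSpace E]
    [MetricSpace E0] [MeasurableSpace E0] [BorelSpace E0] [PolishSpace E0]
    (lamE : Measure E) [IsProbabilityMeasure lamE]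
    (F : S → A → Measure (S × A) → E → E0 → S)
    (hFmeas : ∀ (Λ : Measure (S × A)) (e0 : E0),
      Measurable fun q : (S × A) × E => F q.1.1 q.1.2 Λ q.2 e0)
    (CF : ℝ) (hCF : 0 < CF)
    (hFlip : ∀ (s s' : S) (a a' : A) (Λ Λ' : Measure (S × A)) (e0 e0' : E0),
      IsProbabilityMeasure Λ → IsProbabilityMeasure Λ' →
      ∫ e, dist (F s a Λ e e0) (F s' a' Λ' e e0') ∂lamE ≤
        CF * (dist s s' + dist a a' + W1sum Λ Λ' + dist e0 e0'))
    (μ μ' : Measure S) (Λ Λ' : Measure (S × A))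
    [IsProbabilityMeasure Λ] [IsProbabilityMeasure Λ']
    (hm : Λ.map Prod.fst = μ) (hm' : Λ'.map Prod.fst = μ')
    (e0 e0' : E0) :
    W1 ((Λ.prod lamE).map (fun q : (S × A) × E => F q.1.1 q.1.2 Λ q.2 e0))
       ((Λ'.prod lamE).map (fun q : (S × A) × E => F q.1.1 q.1.2 Λ' q.2 e0')) ≤
      CF * (2 * W1sum Λ Λ' + dist e0 e0') := by

  classical
  set G1 : (S × A) × E → S := fun q => F q.1.1 q.1.2 Λ q.2 e0 with hG1def
  set G2 : (S × A) × E → S := fun q => F q.1.1 q.1.2 Λ' q.2 e0' with hG2def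
  have hG1m : Measurable G1 := hFmeas Λ e0
  have hG2m : Measurable G2 := hFmeas Λ' e0'
  obtain ⟨CS, hCS⟩ : ∃ C : ℝ, ∀ x y : S, dist x y ≤ C := by
    obtain ⟨C, hC⟩ := (Metric.isBounded_iff).mp (Metric.isBounded_of_compactSpace (α := S))
    exact ⟨C, fun x y => hC (Set.mem_univ x) (Set.mem_univ y)⟩
  obtain ⟨CA, hCA⟩ : ∃ C : ℝ, ∀ x y : A, dist x y ≤ C := by
    obtain ⟨C, hC⟩ := (Metric.isBounded_iff).mp (Metric.isBounded_of_compactSpace (α := A))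
    exact ⟨C, fun x y => hC (Set.mem_univ x) (Set.mem_univ y)⟩
  set Wv := W1sum Λ Λ' with hWv
  set d0 := dist e0 e0' with hd0
  set ν1 := (Λ.prod lamE).map G1 with hν1
  set ν2 := (Λ'.prod lamE).map G2 with hν2
  set Sset : Set ℝ := {r : ℝ | ∃ γ : Measure ((S × A) × (S × A)), IsProbabilityMeasure γ ∧
    γ.map Prod.fst = Λ ∧ γ.map Prod.snd = Λ' ∧
    r = ∫ q, (dist q.1.1 q.2.1 + dist q.1.2 q.2.2) ∂γ} with hSset
  have hSne : Sset.Nonempty := by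
    refine ⟨∫ q : (S × A) × (S × A), (dist q.1.1 q.2.1 + dist q.1.2 q.2.2) ∂(Λ.prod Λ'),
      Λ.prod Λ', inferInstance, ?_, ?_, rfl⟩
    · simp [Measure.map_fst_prod]
    · simp [Measure.map_snd_prod]
  have key : ∀ r ∈ Sset, W1 ν1 ν2 ≤ CF * (r + (Wv + d0)) := by
    rintro r ⟨γ, hγp, hγ1, hγ2, hr⟩
    haveI := hγp
    haveI : SFinite γ := inferInstance
    set Gp : (((S × A) × (S × A)) × E) → S × S :=
      fun p => (G1 (p.1.1, p.2), G2 (p.1.2, p.2)) with hGp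
    have hGpm : Measurable Gp :=
      (hG1m.comp (measurable_fst.fst.prodMk measurable_snd)).prodMk
        (hG2m.comp (measurable_fst.snd.prodMk measurable_snd))
    set γ' := (γ.prod lamE).map Gp with hγ'
    haveI : IsProbabilityMeasure (γ.prod lamE) := inferInstance
    haveI hγ'p : IsProbabilityMeasure γ' := Measure.isProbabilityMeasure_map hGpm.aemeasurable
    -- marginals
    have hmarg1 : γ'.map Prod.fst = ν1 := by
      rw [hγ', Measure.map_map measurable_fst hGpm]
      have h1 : (Prod.fst ∘ Gp) = G1 ∘ (Prod.map Prod.fst (id : E → E)) := rfl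
      rw [h1, ← Measure.map_map hG1m (measurable_fst.prodMap measurable_id),
        ← Measure.map_prod_map _ _ measurable_fst measurable_id, hγ1, Measure.map_id]
    have hmarg2 : γ'.map Prod.snd = ν2 := by
      rw [hγ', Measure.map_map measurable_snd hGpm]
      have h1 : (Prod.snd ∘ Gp) = G2 ∘ (Prod.map Prod.snd (id : E → E)) := rfl
      rw [h1, ← Measure.map_map hG2m (measurable_snd.prodMap measurable_id),
        ← Measure.map_prod_map _ _ measurable_snd measurable_id, hγ2, Measure.map_id]
    -- cost of the coupling
    have hfm : Measurable fun p : ((S × A) × (S × A)) × E => dist (Gp p).1 (Gp p).2 :=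
      measurable_dist.comp hGpm
    have hfint : Integrable (fun p : ((S × A) × (S × A)) × E => dist (Gp p).1 (Gp p).2)
        (γ.prod lamE) := by
      refine (integrable_const CS).mono' hfm.aestronglyMeasurable ?_
      filter_upwards with p
      rw [Real.norm_eq_abs, abs_of_nonneg dist_nonneg]
      exact hCS _ _
    have hcost : ∫ p, dist p.1 p.2 ∂γ' =
        ∫ q, (∫ e, dist (F q.1.1 q.1.2 Λ e e0) (F q.2.1 q.2.2 Λ' e e0') ∂lamE) ∂γ := by
      rw [hγ', integral_map hGpm.aemeasurable
        (measurable_dist.aestronglyMeasurable), MeasureTheory.integral_prod _ hfint]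
    -- the key pointwise bound
    have hpt : ∀ q : (S × A) × (S × A),
        (∫ e, dist (F q.1.1 q.1.2 Λ e e0) (F q.2.1 q.2.2 Λ' e e0') ∂lamE) ≤
        CF * ((dist q.1.1 q.2.1 + dist q.1.2 q.2.2) + (Wv + d0)) := by
      intro q
      have := hFlip q.1.1 q.2.1 q.1.2 q.2.2 Λ Λ' e0 e0' inferInstance inferInstance
      calc (∫ e, dist (F q.1.1 q.1.2 Λ e e0) (F q.2.1 q.2.2 Λ' e e0') ∂lamE)
          ≤ CF * (dist q.1.1 q.2.1 + dist q.1.2 q.2.2 + Wv + d0) := this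
        _ = CF * ((dist q.1.1 q.2.1 + dist q.1.2 q.2.2) + (Wv + d0)) := by ring
    -- integrability of the bound
    have hi1 : Integrable (fun q : (S × A) × (S × A) => dist q.1.1 q.2.1) γ := by
      refine (integrable_const CS).mono'
        (measurable_dist.comp (measurable_fst.fst.prodMk measurable_snd.fst)).aestronglyMeasurable ?_
      filter_upwards with q
      rw [Real.norm_eq_abs, abs_of_nonneg dist_nonneg]; exact hCS _ _
    have hi2 : Integrable (fun q : (S × A) × (S × A) => dist q.1.2 q.2.2) γ := by
      refine (integrable_const CA).mono'
        (measurable_dist.comp (measurable_fst.snd.prodMk measurable_snd.snd)).aestronglyMeasurable ?_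
      filter_upwards with q
      rw [Real.norm_eq_abs, abs_of_nonneg dist_nonneg]; exact hCA _ _
    have higsum : Integrable
        (fun q : (S × A) × (S × A) => dist q.1.1 q.2.1 + dist q.1.2 q.2.2) γ := hi1.add hi2
    have hig : Integrable (fun q : (S × A) × (S × A) =>
        CF * ((dist q.1.1 q.2.1 + dist q.1.2 q.2.2) + (Wv + d0))) γ :=
      ((higsum.add (integrable_const _)).const_mul _)
    -- compare integrals
    have hmono : ∫ q, (∫ e, dist (F q.1.1 q.1.2 Λ e e0) (F q.2.1 q.2.2 Λ' e e0') ∂lamE) ∂γ ≤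
        ∫ q, CF * ((dist q.1.1 q.2.1 + dist q.1.2 q.2.2) + (Wv + d0)) ∂γ := by
      refine integral_mono_of_nonneg ?_ hig ?_
      · filter_upwards with q
        exact integral_nonneg fun e => dist_nonneg
      · filter_upwards with q
        exact hpt q
    have hrhs : ∫ q, CF * ((dist q.1.1 q.2.1 + dist q.1.2 q.2.2) + (Wv + d0)) ∂γ =
        CF * (r + (Wv + d0)) := by
      rw [integral_const_mul, integral_add higsum (integrable_const _), integral_const]
      simp [hr]
    -- put together: W1 ≤ cost of γ'
    have hW1le : W1 ν1 ν2 ≤ ∫ p, dist p.1 p.2 ∂γ' := by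
      apply csInf_le
      · refine ⟨0, ?_⟩
        rintro x ⟨δ, hδp, hδ1, hδ2, hx⟩
        rw [hx]
        exact integral_nonneg fun p => dist_nonneg
      · exact ⟨γ', hγ'p, hmarg1, hmarg2, rfl⟩
    calc W1 ν1 ν2 ≤ ∫ p, dist p.1 p.2 ∂γ' := hW1le
      _ = ∫ q, (∫ e, dist (F q.1.1 q.1.2 Λ e e0) (F q.2.1 q.2.2 Λ' e e0') ∂lamE) ∂γ := hcost
      _ ≤ ∫ q, CF * ((dist q.1.1 q.2.1 + dist q.1.2 q.2.2) + (Wv + d0)) ∂γ := hmono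
      _ = CF * (r + (Wv + d0)) := hrhs
  -- take infimum over couplings
  have hle : W1 ν1 ν2 / CF - Wv - d0 ≤ Wv := by
    have : W1 ν1 ν2 / CF - Wv - d0 ≤ sInf Sset := by
      refine le_csInf hSne ?_
      intro r hr
      have h := key r hr
      rw [sub_le_iff_le_add, sub_le_iff_le_add, div_le_iff₀ hCF]
      nlinarith
    simpa [hWv, hSset, W1sum] using this
  have hdiv : W1 ν1 ν2 / CF ≤ 2 * Wv + d0 := by linarith
  calc W1 ν1 ν2 = (W1 ν1 ν2 / CF) * CF := by field_simp
    _ ≤ (2 * Wv + d0) * CF := mul_le_mul_of_nonneg_right hdiv hCF.le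
    _ = CF * (2 * Wv + d0) := by ring
end

section
/- Let 𝒯 be the Bellman–Isaacs operator on bounded Lipschitz functions on P(S): (𝒯V̄)(μ) = sup_{Λ ∈ 𝔘(μ)} { r̄(μ,Λ) + β·inf_{p ∈ 𝔓⁰} ∫_{P(S)} V̄(μ') p̄(dμ' | μ, Λ, p) }, where p̄(·|μ,Λ,p) is the pushforward of p by e⁰ ↦ F̄(μ,Λ,e⁰). Under the standing assumptions (𝔓⁰ compact, F̄ satisfying W(F̄(μ,Λ,e⁰),F̄(μ̃,Λ̃,ẽ⁰)) ≤ C̄_F(2W(Λ,Λ̃)+d(e⁰,ẽ⁰)), r̄ bounded and 2C̄_r-Lipschitz in Λ, and β ∈ [0, min(1, 1/(2C̄_F)))), for any L̄ ≥ 2C̄_r/(1−2βC̄_F): if V̄ is bounded and L̄-Lipschitz on P(S), then 𝒯V̄ is bounded and L̄-Lipschitz on P(S). -/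
open MeasureTheory

section Aux
open ProbabilityTheory

variable {X : Type*} [MeasurableSpace X] [PseudoMetricSpace X]

/-- The coupling set underlying `W1`. -/
def W1cset (μ ν : Measure X) : Set ℝ :=
  {r : ℝ | ∃ γ : Measure (X × X), IsProbabilityMeasure γ ∧
    γ.map Prod.fst = μ ∧ γ.map Prod.snd = ν ∧ r = ∫ p, dist p.1 p.2 ∂γ}

lemma W1_def (μ ν : Measure X) : W1 μ ν = sInf (W1cset μ ν) := rfl

lemma W1cset_nonempty (μ ν : Measure X) [IsProbabilityMeasure μ] [IsProbabilityMeasure ν] :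
    (W1cset μ ν).Nonempty :=
  ⟨_, μ.prod ν, inferInstance, Measure.fst_prod, Measure.snd_prod, rfl⟩

end Aux

section Symm
open ProbabilityTheory
variable {X : Type*} [MeasurableSpace X] [MetricSpace X] [BorelSpace X]
  [SecondCountableTopology X] {μ ν : Measure X}

lemma W1cset_swap_subset : W1cset μ ν ⊆ W1cset ν μ := by
  rintro r ⟨γ, hγ, h1, h2, rfl⟩
  have hswap : Measurable (Prod.swap : X × X → X × X) := measurable_swap
  refine ⟨γ.map Prod.swap, Measure.isProbabilityMeasure_map hswap.aemeasurable, ?_, ?_, ?_⟩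
  · rw [Measure.map_map measurable_fst hswap]; exact h2
  · rw [Measure.map_map measurable_snd hswap]; exact h1
  · rw [integral_map hswap.aemeasurable]
    · simp [dist_comm]
    · exact (continuous_dist.comp (continuous_fst.prodMk continuous_snd)).aestronglyMeasurable

lemma W1_symm (μ ν : Measure X) : W1 μ ν = W1 ν μ := by
  have : W1cset μ ν = W1cset ν μ := le_antisymm W1cset_swap_subset W1cset_swap_subset
  rw [W1_def, W1_def, this]

end Symm

section W1sumlem
open ProbabilityTheory
variable {S A : Type*} [MeasurableSpace S] [PseudoMetricSpace S]
    [MeasurableSpace A] [PseudoMetricSpace A] {Λ Λ' : Measure (S × A)}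

lemma W1sum_nonneg (Λ Λ' : Measure (S × A)) : 0 ≤ W1sum Λ Λ' := by
  apply Real.sInf_nonneg
  rintro r ⟨γ, _, _, _, rfl⟩
  exact integral_nonneg fun p => add_nonneg dist_nonneg dist_nonneg

lemma W1sum_le (γ : Measure ((S × A) × (S × A))) (h1 : IsProbabilityMeasure γ)
    (h2 : γ.map Prod.fst = Λ) (h3 : γ.map Prod.snd = Λ') :
    W1sum Λ Λ' ≤ ∫ q, (dist q.1.1 q.2.1 + dist q.1.2 q.2.2) ∂γ := by
  apply csInf_le
  · refine ⟨0, fun r hr => ?_⟩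
    obtain ⟨γ, _, _, _, rfl⟩ := hr
    exact integral_nonneg fun p => add_nonneg dist_nonneg dist_nonneg
  · exact ⟨γ, h1, h2, h3, rfl⟩

lemma W1sum_self [OpensMeasurableSpace S] [SecondCountableTopology S] [OpensMeasurableSpace A]
    [SecondCountableTopology A] (Λ : Measure (S × A)) [IsProbabilityMeasure Λ] :
    W1sum Λ Λ = 0 := by
  have hdiag : Measurable (fun x : S × A => (x, x)) := measurable_id.prodMk measurable_id
  have h1 : (Λ.map (fun x : S × A => (x, x))).map Prod.fst = Λ := by
    rw [Measure.map_map measurable_fst hdiag]; simp [Function.comp_def]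
  have h2 : (Λ.map (fun x : S × A => (x, x))).map Prod.snd = Λ := by
    rw [Measure.map_map measurable_snd hdiag]; simp [Function.comp_def]
  have hle := W1sum_le _ (Measure.isProbabilityMeasure_map hdiag.aemeasurable) h1 h2
  rw [integral_map hdiag.aemeasurable] at hle
  · simp at hle
    exact le_antisymm hle (W1sum_nonneg _ _)
  · have hc : Continuous fun q : (S×A)×(S×A) => dist q.1.1 q.2.1 + dist q.1.2 q.2.2 := by fun_prop
    exact hc.aestronglyMeasurable

end W1sumlem

open ProbabilityTheory in
lemma coupling_transfer {S A : Type*}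
    [MetricSpace S] [CompactSpace S] [MeasurableSpace S] [BorelSpace S] [Nonempty S]
    [MetricSpace A] [CompactSpace A] [MeasurableSpace A] [BorelSpace A] [Nonempty A]
    (Λ : Measure (S × A)) [IsProbabilityMeasure Λ]
    (γ : Measure (S × S)) [IsProbabilityMeasure γ]
    (hf : γ.map Prod.fst = Λ.map Prod.fst) :
    ∃ Λ' : Measure (S × A), IsProbabilityMeasure Λ' ∧ Λ'.map Prod.fst = γ.map Prod.snd ∧
      W1sum Λ Λ' ≤ ∫ p, dist p.1 p.2 ∂γ := by
  set κ : Kernel S A := Λ.condKernel with hκ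
  set κ' : Kernel (S × S) A := κ.comap Prod.fst measurable_fst with hκ'
  haveI : IsMarkovKernel κ' := Kernel.IsMarkovKernel.comap κ measurable_fst
  set m : Measure ((S × S) × A) := γ.compProd κ' with hm
  haveI : IsProbabilityMeasure m := inferInstance
  set φ : (S × S) × A → (S × A) × (S × A) := fun q => ((q.1.1, q.2), (q.1.2, q.2)) with hφ
  have hφm : Measurable φ := by fun_prop
  set gam : Measure ((S × A) × (S × A)) := m.map φ with hgam
  set Λ' : Measure (S × A) := m.map (fun q => (q.1.2, q.2)) with hΛ'
  have hm2 : Measurable (fun q : (S × S) × A => (q.1.2, q.2)) := by fun_prop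
  have hm1 : Measurable (fun q : (S × S) × A => (q.1.1, q.2)) := by fun_prop
  haveI hΛ'p : IsProbabilityMeasure Λ' := Measure.isProbabilityMeasure_map hm2.aemeasurable
  haveI : IsProbabilityMeasure gam := Measure.isProbabilityMeasure_map hφm.aemeasurable
  have hfst : gam.map Prod.fst = Λ := by
    rw [hgam, Measure.map_map measurable_fst hφm]
    have : (Prod.fst ∘ φ) = fun q : (S × S) × A => (q.1.1, q.2) := rfl
    rw [this]
    have hdis : Λ.fst ⊗ₘ κ = Λ := Λ.disintegrate _
    ext t ht
    rw [Measure.map_apply hm1 ht, hm, Measure.compProd_apply (hm1 ht)]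
    have : ∀ x : S × S, (κ' x) (Prod.mk x ⁻¹' ((fun q : (S × S) × A => (q.1.1, q.2)) ⁻¹' t))
        = (κ x.1) (Prod.mk x.1 ⁻¹' t) := by intro x; rfl
    simp_rw [this]
    rw [← lintegral_map (Kernel.measurable_kernel_prodMk_left ht) measurable_fst, hf]
    have : Λ.map Prod.fst = Λ.fst := rfl
    rw [this, ← Measure.compProd_apply ht, hdis]
  have hsnd : gam.map Prod.snd = Λ' := by
    rw [hgam, Measure.map_map measurable_snd hφm]; rfl
  have hΛ'fst : Λ'.map Prod.fst = γ.map Prod.snd := by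
    rw [hΛ', Measure.map_map measurable_fst hm2]
    have h1 : ((fun q : (S × S) × A => q.1.2)) = Prod.snd ∘ (Prod.fst : (S × S) × A → S × S) := rfl
    have : (Prod.fst ∘ fun q : (S × S) × A => (q.1.2, q.2)) = fun q : (S × S) × A => q.1.2 := rfl
    rw [this, h1, ← Measure.map_map measurable_snd measurable_fst]
    have : m.map Prod.fst = γ := Measure.fst_compProd γ κ'
    rw [this]
  refine ⟨Λ', hΛ'p, hΛ'fst, ?_⟩
  have hle := W1sum_le gam inferInstance hfst hsnd
  refine hle.trans (le_of_eq ?_)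
  have hc : Continuous fun q : (S × A) × (S × A) => dist q.1.1 q.2.1 + dist q.1.2 q.2.2 := by
    fun_prop
  rw [hgam, integral_map hφm.aemeasurable hc.aestronglyMeasurable]
  have : ∀ q : (S × S) × A, dist (φ q).1.1 (φ q).2.1 + dist (φ q).1.2 (φ q).2.2
      = dist q.1.1 q.1.2 := by intro q; simp [hφ]
  simp_rw [this]
  have hint : Integrable (fun q : (S × S) × A => dist q.1.1 q.1.2) m := by
    have hcont : Continuous fun q : (S × S) × A => dist q.1.1 q.1.2 := by fun_prop
    refine ⟨hcont.aestronglyMeasurable, ?_⟩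
    apply HasFiniteIntegral.of_bounded (C := Metric.diam (Set.univ : Set S))
    filter_upwards with q
    rw [Real.norm_eq_abs, abs_of_nonneg dist_nonneg]
    exact Metric.dist_le_diam_of_mem isCompact_univ.isBounded trivial trivial
  rw [hm, Measure.integral_compProd hint]
  congr 1
  ext x
  simp

/-- The Bellman–Isaacs operator
`(𝒯V̄)(μ) = sup_{Λ ∈ 𝔘(μ)} { r̄(μ,Λ) + β inf_{p ∈ 𝔓⁰} ∫ V̄(F̄(μ,Λ,e⁰)) dp(e⁰) }`,
where the inner integral is `∫ V̄ dp̄(·|μ,Λ,p)` for `p̄(·|μ,Λ,p)` the pushforward of `p`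
by `e⁰ ↦ F̄(μ,Λ,e⁰)`. -/
noncomputable def BellmanT {S A E0 : Type*}
    [MeasurableSpace S] [PseudoMetricSpace S] [MeasurableSpace A] [PseudoMetricSpace A]
    [MeasurableSpace E0]
    (P0 : Set (ProbabilityMeasure E0)) (β : ℝ)
    (rbar : ProbabilityMeasure S → ProbabilityMeasure (S × A) → ℝ)
    (Fbar : ProbabilityMeasure S → ProbabilityMeasure (S × A) → E0 → ProbabilityMeasure S)
    (V : ProbabilityMeasure S → ℝ) (μ : ProbabilityMeasure S) : ℝ :=
  ⨆ Λ : {Λ : ProbabilityMeasure (S × A) //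
      (Λ : Measure (S × A)).map Prod.fst = (μ : Measure S)},
    (rbar μ Λ.1 + β * ⨅ p : P0, ∫ e0, V (Fbar μ Λ.1 e0) ∂(p.1 : Measure E0))

/-- Lipschitz invariance of the Bellman–Isaacs operator: under the standing
assumptions and for `L̄ ≥ 2C̄_r/(1 − 2βC̄_F)`, if `V̄` is bounded and `L̄`-Lipschitz on
`P(S)` then so is `𝒯V̄`. -/
theorem stmt_9 {S A E0 : Type*}
    [MetricSpace S] [CompactSpace S] [MeasurableSpace S] [BorelSpace S] [Nonempty S]
    [MetricSpace A] [CompactSpace A] [MeasurableSpace A] [BorelSpace A] [Nonempty A]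
    [MetricSpace E0] [MeasurableSpace E0] [BorelSpace E0] [PolishSpace E0]
    (P0 : Set (ProbabilityMeasure E0)) (hP0ne : P0.Nonempty) (hP0cp : IsCompact P0)
    (Fbar : ProbabilityMeasure S → ProbabilityMeasure (S × A) → E0 → ProbabilityMeasure S)
    (CF : ℝ) (hCF : 0 < CF)
    (hFlip : ∀ (μ μ' : ProbabilityMeasure S) (Λ Λ' : ProbabilityMeasure (S × A)) (e0 e0' : E0),
      (Λ : Measure (S × A)).map Prod.fst = (μ : Measure S) →
      (Λ' : Measure (S × A)).map Prod.fst = (μ' : Measure S) →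
      W1 (Fbar μ Λ e0 : Measure S) (Fbar μ' Λ' e0' : Measure S) ≤
        CF * (2 * W1sum (Λ : Measure (S × A)) (Λ' : Measure (S × A)) + dist e0 e0'))
    (rbar : ProbabilityMeasure S → ProbabilityMeasure (S × A) → ℝ)
    (Cr : ℝ) (hCr : 0 < Cr)
    (hrb : ∃ M, ∀ (μ : ProbabilityMeasure S) (Λ : ProbabilityMeasure (S × A)),
      (Λ : Measure (S × A)).map Prod.fst = (μ : Measure S) → |rbar μ Λ| ≤ M)
    (hrlip : ∀ (μ μ' : ProbabilityMeasure S) (Λ Λ' : ProbabilityMeasure (S × A)),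
      (Λ : Measure (S × A)).map Prod.fst = (μ : Measure S) →
      (Λ' : Measure (S × A)).map Prod.fst = (μ' : Measure S) →
      |rbar μ Λ - rbar μ' Λ'| ≤ 2 * Cr * W1sum (Λ : Measure (S × A)) (Λ' : Measure (S × A)))
    (β : ℝ) (hβ0 : 0 ≤ β) (hβ1 : β < min 1 (1 / (2 * CF)))
    (L : ℝ) (hLlb : 2 * Cr / (1 - 2 * β * CF) ≤ L)
    (V : ProbabilityMeasure S → ℝ)
    (hVb : ∃ M, ∀ μ, |V μ| ≤ M)
    (hVlip : ∀ μ μ' : ProbabilityMeasure S,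
      |V μ - V μ'| ≤ L * W1 (μ : Measure S) (μ' : Measure S)) :
    (∃ M, ∀ μ, |BellmanT P0 β rbar Fbar V μ| ≤ M) ∧
    ∀ μ μ' : ProbabilityMeasure S,
      |BellmanT P0 β rbar Fbar V μ - BellmanT P0 β rbar Fbar V μ'| ≤
        L * W1 (μ : Measure S) (μ' : Measure S) := by
  classical
  obtain ⟨Mr, hMr⟩ := hrb
  obtain ⟨Mv, hMv⟩ := hVb
  haveI hP0 : Nonempty ↥P0 := hP0ne.to_subtype
  -- basic constants
  have hβCF : 2 * β * CF < 1 := by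
    have h2 : β < 1 / (2 * CF) := lt_of_lt_of_le hβ1 (min_le_right _ _)
    have := (lt_div_iff₀ (by positivity : (0:ℝ) < 2 * CF)).mp h2
    linarith
  have hden : 0 < 1 - 2 * β * CF := by linarith
  have hL0 : 0 < L := lt_of_lt_of_le (by positivity) hLlb
  have hkey : 2 * Cr + β * (L * (2 * CF)) ≤ L := by
    have := (div_le_iff₀ hden).mp hLlb
    nlinarith
  have hMv0 : 0 ≤ Mv := by
    have : Nonempty (ProbabilityMeasure S) :=
      ⟨⟨Measure.dirac (Classical.arbitrary S), inferInstance⟩⟩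
    exact le_trans (abs_nonneg _) (hMv (Classical.arbitrary _))
  -- notation
  set 𝔘 : ProbabilityMeasure S → Type _ := fun μ => {Λ : ProbabilityMeasure (S × A) //
      (Λ : Measure (S × A)).map Prod.fst = (μ : Measure S)} with h𝔘
  set D : ProbabilityMeasure S → ProbabilityMeasure (S × A) → ℝ := fun μ Λ =>
    ⨅ p : P0, ∫ e0, V (Fbar μ Λ e0) ∂(p.1 : Measure E0) with hD
  have hT : ∀ μ, BellmanT P0 β rbar Fbar V μ = ⨆ Λ : 𝔘 μ, (rbar μ Λ.1 + β * D μ Λ.1) := by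
    intro μ; rfl
  -- nonemptiness of the admissible sets
  have hne : ∀ μ : ProbabilityMeasure S, Nonempty (𝔘 μ) := by
    intro μ
    refine ⟨⟨⟨(μ : Measure S).prod (Measure.dirac (Classical.arbitrary A)), inferInstance⟩, ?_⟩⟩
    exact Measure.fst_prod
  -- integrability of the inner integrand
  have hInt : ∀ (μ : ProbabilityMeasure S) (Λ : ProbabilityMeasure (S × A)),
      (Λ : Measure (S × A)).map Prod.fst = (μ : Measure S) → ∀ p : P0,
      Integrable (fun e0 => V (Fbar μ Λ e0)) (p.1 : Measure E0) := by
    intro μ Λ hΛ p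
    have hW0 : W1sum (Λ : Measure (S × A)) (Λ : Measure (S × A)) = 0 := W1sum_self _
    have hlip : ∀ e0 e0' : E0, dist (V (Fbar μ Λ e0)) (V (Fbar μ Λ e0'))
        ≤ (L * CF) * dist e0 e0' := by
      intro e0 e0'
      rw [Real.dist_eq]
      calc |V (Fbar μ Λ e0) - V (Fbar μ Λ e0')|
          ≤ L * W1 (Fbar μ Λ e0 : Measure S) (Fbar μ Λ e0' : Measure S) := hVlip _ _
        _ ≤ L * (CF * (2 * W1sum (Λ : Measure (S×A)) (Λ : Measure (S×A)) + dist e0 e0')) := by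
            exact mul_le_mul_of_nonneg_left (hFlip μ μ Λ Λ e0 e0' hΛ hΛ) hL0.le
        _ = (L * CF) * dist e0 e0' := by rw [hW0]; ring
    have hcont : Continuous fun e0 => V (Fbar μ Λ e0) :=
      (LipschitzWith.of_dist_le_mul (K := Real.toNNReal (L * CF)) (by
        intro x y
        rw [Real.coe_toNNReal _ (by positivity)]
        exact hlip x y)).continuous
    refine ⟨hcont.aestronglyMeasurable, ?_⟩
    exact HasFiniteIntegral.of_bounded (C := Mv)
      (Filter.Eventually.of_forall fun e0 => by simpa [Real.norm_eq_abs] using hMv _)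
  -- bound on each inner integral
  have hIb : ∀ (μ : ProbabilityMeasure S) (Λ : ProbabilityMeasure (S × A)) (p : P0),
      |∫ e0, V (Fbar μ Λ e0) ∂(p.1 : Measure E0)| ≤ Mv := by
    intro μ Λ p
    calc |∫ e0, V (Fbar μ Λ e0) ∂(p.1 : Measure E0)|
        ≤ Mv * ((p.1 : Measure E0) Set.univ).toReal := by
          rw [← Real.norm_eq_abs]
          exact norm_integral_le_of_norm_le_const
            (Filter.Eventually.of_forall fun e0 => by simpa [Real.norm_eq_abs] using hMv _)
      _ = Mv := by simp
  have hDbdd : ∀ (μ : ProbabilityMeasure S) (Λ : ProbabilityMeasure (S × A)),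
      BddBelow (Set.range fun p : P0 => ∫ e0, V (Fbar μ Λ e0) ∂(p.1 : Measure E0)) := by
    intro μ Λ
    exact ⟨-Mv, by rintro _ ⟨p, rfl⟩; exact (abs_le.mp (hIb μ Λ p)).1⟩
  have hDb : ∀ (μ : ProbabilityMeasure S) (Λ : ProbabilityMeasure (S × A)), |D μ Λ| ≤ Mv := by
    intro μ Λ
    rw [abs_le]
    constructor
    · exact le_ciInf fun p => (abs_le.mp (hIb μ Λ p)).1
    · exact le_trans (ciInf_le (hDbdd μ Λ) (Classical.arbitrary _))
        (abs_le.mp (hIb μ Λ _)).2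
  -- comparison of inner infima
  have hDdiff : ∀ (μ μ' : ProbabilityMeasure S) (Λ Λ' : ProbabilityMeasure (S × A)),
      (Λ : Measure (S × A)).map Prod.fst = (μ : Measure S) →
      (Λ' : Measure (S × A)).map Prod.fst = (μ' : Measure S) →
      D μ Λ ≤ D μ' Λ' + L * (2 * CF) * W1sum (Λ : Measure (S×A)) (Λ' : Measure (S×A)) := by
    intro μ μ' Λ Λ' hΛ hΛ'
    set c := L * (2 * CF) * W1sum (Λ : Measure (S×A)) (Λ' : Measure (S×A)) with hc
    have hstep : ∀ p : P0, |∫ e0, V (Fbar μ Λ e0) ∂(p.1 : Measure E0)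
        - ∫ e0, V (Fbar μ' Λ' e0) ∂(p.1 : Measure E0)| ≤ c := by
      intro p
      rw [← integral_sub (hInt μ Λ hΛ p) (hInt μ' Λ' hΛ' p)]
      calc |∫ e0, (V (Fbar μ Λ e0) - V (Fbar μ' Λ' e0)) ∂(p.1 : Measure E0)|
          ≤ c * ((p.1 : Measure E0) Set.univ).toReal := by
            rw [← Real.norm_eq_abs]
            refine norm_integral_le_of_norm_le_const (Filter.Eventually.of_forall fun e0 => ?_)
            rw [Real.norm_eq_abs]
            calc |V (Fbar μ Λ e0) - V (Fbar μ' Λ' e0)|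
                ≤ L * W1 (Fbar μ Λ e0 : Measure S) (Fbar μ' Λ' e0 : Measure S) := hVlip _ _
              _ ≤ L * (CF * (2 * W1sum (Λ : Measure (S×A)) (Λ' : Measure (S×A)) + dist e0 e0))
                  := mul_le_mul_of_nonneg_left (hFlip μ μ' Λ Λ' e0 e0 hΛ hΛ') hL0.le
              _ = c := by rw [hc]; simp; ring
        _ = c := by simp
    have : ∀ p : P0, D μ Λ - c ≤ ∫ e0, V (Fbar μ' Λ' e0) ∂(p.1 : Measure E0) := by
      intro p
      have h1 : D μ Λ ≤ ∫ e0, V (Fbar μ Λ e0) ∂(p.1 : Measure E0) := ciInf_le (hDbdd μ Λ) p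
      have h2 := (abs_le.mp (hstep p)).2
      linarith
    have := le_ciInf this
    rw [hD]
    linarith [this]
  -- bound on the sup terms
  have hterm : ∀ (μ : ProbabilityMeasure S) (Λ : 𝔘 μ),
      |rbar μ Λ.1 + β * D μ Λ.1| ≤ Mr + β * Mv := by
    intro μ Λ
    calc |rbar μ Λ.1 + β * D μ Λ.1| ≤ |rbar μ Λ.1| + |β * D μ Λ.1| := abs_add_le _ _
      _ = |rbar μ Λ.1| + β * |D μ Λ.1| := by rw [abs_mul, abs_of_nonneg hβ0]
      _ ≤ Mr + β * Mv := by
          have := hMr μ Λ.1 Λ.2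
          have := hDb μ Λ.1
          nlinarith [abs_nonneg (D μ Λ.1)]
  have hBdd : ∀ μ : ProbabilityMeasure S,
      BddAbove (Set.range fun Λ : 𝔘 μ => rbar μ Λ.1 + β * D μ Λ.1) := by
    intro μ
    exact ⟨Mr + β * Mv, by rintro _ ⟨Λ, rfl⟩; exact (abs_le.mp (hterm μ Λ)).2⟩
  -- boundedness of T
  constructor
  · refine ⟨Mr + β * Mv, fun μ => ?_⟩
    haveI := hne μ
    rw [hT, abs_le]
    constructor
    · exact le_trans (abs_le.mp (hterm μ (Classical.arbitrary _))).1
        (le_ciSup (hBdd μ) (Classical.arbitrary _))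
    · exact ciSup_le fun Λ => (abs_le.mp (hterm μ Λ)).2
  -- Lipschitz estimate
  have hmain : ∀ μ μ' : ProbabilityMeasure S,
      BellmanT P0 β rbar Fbar V μ - BellmanT P0 β rbar Fbar V μ' ≤
        L * W1 (μ : Measure S) (μ' : Measure S) := by
    intro μ μ'
    have hstep : ∀ r ∈ W1cset (μ : Measure S) (μ' : Measure S),
        BellmanT P0 β rbar Fbar V μ - BellmanT P0 β rbar Fbar V μ' ≤ L * r := by
      rintro r ⟨γ, hγp, hγ1, hγ2, rfl⟩
      haveI := hγp
      rw [sub_le_iff_le_add, hT]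
      haveI := hne μ
      apply ciSup_le
      intro Λ
      obtain ⟨Λ'm, hΛ'p, hΛ'fst, hWle⟩ := coupling_transfer (Λ.1 : Measure (S × A)) γ
        (hγ1.trans Λ.2.symm)
      haveI := hΛ'p
      set Λ' : ProbabilityMeasure (S × A) := ⟨Λ'm, hΛ'p⟩ with hΛ'def
      have hΛ'marg : (Λ' : Measure (S × A)).map Prod.fst = (μ' : Measure S) :=
        hΛ'fst.trans hγ2
      have hW0 : 0 ≤ W1sum (Λ.1 : Measure (S×A)) (Λ' : Measure (S×A)) := W1sum_nonneg _ _
      have hr0 : 0 ≤ ∫ p, dist p.1 p.2 ∂γ := integral_nonneg fun p => dist_nonneg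
      have h1 : rbar μ Λ.1 ≤ rbar μ' Λ' +
          2 * Cr * W1sum (Λ.1 : Measure (S×A)) (Λ' : Measure (S×A)) := by
        have := (abs_le.mp (hrlip μ μ' Λ.1 Λ' Λ.2 hΛ'marg)).2
        linarith
      have h2 : D μ Λ.1 ≤ D μ' Λ' +
          L * (2 * CF) * W1sum (Λ.1 : Measure (S×A)) (Λ' : Measure (S×A)) :=
        hDdiff μ μ' Λ.1 Λ' Λ.2 hΛ'marg
      have h3 : rbar μ' Λ' + β * D μ' Λ' ≤ BellmanT P0 β rbar Fbar V μ' := by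
        rw [hT]
        exact le_ciSup (hBdd μ') ⟨Λ', hΛ'marg⟩
      have hWr : W1sum (Λ.1 : Measure (S×A)) (Λ' : Measure (S×A)) ≤ ∫ p, dist p.1 p.2 ∂γ := hWle
      nlinarith [mul_le_mul_of_nonneg_left hWr hL0.le]
    have hdivle : (BellmanT P0 β rbar Fbar V μ - BellmanT P0 β rbar Fbar V μ') / L ≤
        W1 (μ : Measure S) (μ' : Measure S) := by
      rw [W1_def]
      refine le_csInf (W1cset_nonempty _ _) fun r hr => ?_
      rw [div_le_iff₀ hL0, mul_comm]
      exact hstep r hr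
    rw [div_le_iff₀ hL0, mul_comm] at hdivle
    exact hdivle
  intro μ μ'
  rw [abs_sub_le_iff]
  refine ⟨hmain μ μ', ?_⟩
  rw [W1_symm]
  exact hmain μ' μ
end
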